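/- Let p^{cn}, p0, p1 ∈ (0,1) with p0 < p1, 0 < d < 1 < u, γ > 0, θ ∈ [0,1], q = (1-d)/(u-d), and let p = p^{cn}·p1 + (1-p^{cn})·p0. Assume the expected excess return is positive: p(u-1)+(1-p)(d-1) > 0. Then F(0) > 0, where F is the mean field fixed point map, and consequently the unique fixed point y* of F satisfies y* > 0. -/

import Mathlib

lemma aux_log (pcn p0 p1 q e : ℝ) (hcn0 : 0 < pcn) (hcn1 : pcn < 1)
    (hp00 : 0 < p0) (hp01 : p0 < 1) (hp10 : 0 < p1) (hp11 : p1 < 1)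
    (hq0 : 0 < q) (hq1 : q < 1) (he : 0 < e) (he1 : e ≤ 1) :
    Real.log ((1 - q) * (pcn * p1 + (1 - pcn) * p0) /
        (q * (pcn * (1 - p1) + (1 - pcn) * (1 - p0))))
      - Real.log ((1 - q) * (pcn * e * p1 + (1 - pcn) * p0) /
        (q * (pcn * e * (1 - p1) + (1 - pcn) * (1 - p0)))) ≤ - Real.log e := by
  have hq1' : 0 < 1 - q := by linarith
  have hcn1' : 0 < 1 - pcn := by linarith
  have hN1 : 0 < pcn * p1 + (1 - pcn) * p0 := by nlinarith
  have hNe : 0 < pcn * e * p1 + (1 - pcn) * p0 := by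
    nlinarith [mul_pos (mul_pos hcn0 he) hp10, mul_pos hcn1' hp00]
  have hD1 : 0 < pcn * (1 - p1) + (1 - pcn) * (1 - p0) := by nlinarith
  have hDe : 0 < pcn * e * (1 - p1) + (1 - pcn) * (1 - p0) := by
    nlinarith [mul_pos (mul_pos hcn0 he) (by linarith : (0:ℝ) < 1 - p1),
      mul_pos hcn1' (by linarith : (0:ℝ) < 1 - p0)]
  have key : e * ((pcn * p1 + (1 - pcn) * p0) * (pcn * e * (1 - p1) + (1 - pcn) * (1 - p0)))
      ≤ (pcn * e * p1 + (1 - pcn) * p0) * (pcn * (1 - p1) + (1 - pcn) * (1 - p0)) := by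
    nlinarith [mul_pos (mul_pos hcn0 hp10) (mul_pos hcn0 (by linarith : (0:ℝ) < 1 - p1)),
      mul_pos (mul_pos hcn1' hp00) (mul_pos hcn0 (by linarith : (0:ℝ) < 1 - p1)),
      mul_pos (mul_pos hcn1' hp00) (mul_pos hcn1' (by linarith : (0:ℝ) < 1 - p0)),
      mul_nonneg (le_of_lt he) (sub_nonneg.mpr he1)]
  have hlog := Real.log_le_log (by positivity) key
  rw [Real.log_mul he.ne' (mul_pos hN1 hDe).ne', Real.log_mul hN1.ne' hDe.ne',
      Real.log_mul hNe.ne' hD1.ne'] at hlog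
  rw [Real.log_div (mul_ne_zero hq1'.ne' hN1.ne') (mul_ne_zero hq0.ne' hD1.ne'),
      Real.log_div (mul_ne_zero hq1'.ne' hNe.ne') (mul_ne_zero hq0.ne' hDe.ne'),
      Real.log_mul hq1'.ne' hN1.ne', Real.log_mul hq0.ne' hD1.ne',
      Real.log_mul hq1'.ne' hNe.ne', Real.log_mul hq0.ne' hDe.ne']
  linarith

set_option maxHeartbeats 1000000 in
theorem stmt6 (pcn p0 p1 u d γ θ : ℝ)
    (hcn0 : 0 < pcn) (hcn1 : pcn < 1)
    (hp00 : 0 < p0) (hp01 : p0 < 1) (hp10 : 0 < p1) (hp11 : p1 < 1)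
    (hpp : p0 < p1) (hu : 1 < u) (hd1 : d < 1) (hd0 : 0 < d)
    (hγ : 0 < γ) (hθ0 : 0 ≤ θ) (hθ1 : θ ≤ 1)
    (hexcess : (pcn * p1 + (1 - pcn) * p0) * (u - 1)
        + (1 - (pcn * p1 + (1 - pcn) * p0)) * (d - 1) > 0) :
    let q : ℝ := (1 - d) / (u - d)
    let Δ1 : ℝ := p1 * (u - 1) + (1 - p1) * (d - 1)
    let Δ0 : ℝ := p0 * (u - 1) + (1 - p0) * (d - 1)
    let F : ℝ → ℝ := fun y =>
      ((Δ1 - Δ0) / (γ * (u - d))) *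
        Real.log ((1 - q) * (pcn * Real.exp (γ * θ * y) * p1 + (1 - pcn) * p0) /
          (q * (pcn * Real.exp (γ * θ * y) * (1 - p1) + (1 - pcn) * (1 - p0))))
    0 < F 0 ∧ ∀ y : ℝ, y = F y → 0 < y := by
  intro q Δ1 Δ0 F
  have hud : (0:ℝ) < u - d := by linarith
  have hq0 : 0 < q := div_pos (by linarith) hud
  have hq1 : q < 1 := by
    show (1 - d) / (u - d) < 1
    rw [div_lt_one hud]; linarith
  have hq1' : 0 < 1 - q := by linarith
  have hcn1' : 0 < 1 - pcn := by linarith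
  have hc : (Δ1 - Δ0) / (γ * (u - d)) = (p1 - p0) / γ := by
    show (p1 * (u - 1) + (1 - p1) * (d - 1) - (p0 * (u - 1) + (1 - p0) * (d - 1)))
        / (γ * (u - d)) = (p1 - p0) / γ
    rw [div_eq_div_iff (by positivity) hγ.ne']
    ring
  have hN1 : 0 < pcn * p1 + (1 - pcn) * p0 := by nlinarith
  have hD1 : 0 < pcn * (1 - p1) + (1 - pcn) * (1 - p0) := by nlinarith
  have hcpos : 0 < (p1 - p0) / γ := div_pos (by linarith) hγ
  have hF0 : F 0 = ((p1 - p0) / γ) * Real.log ((1 - q) * (pcn * p1 + (1 - pcn) * p0) /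
      (q * (pcn * (1 - p1) + (1 - pcn) * (1 - p0)))) := by
    simp only [F, mul_zero, Real.exp_zero, mul_one, hc]
  have harg : 1 < (1 - q) * (pcn * p1 + (1 - pcn) * p0) /
      (q * (pcn * (1 - p1) + (1 - pcn) * (1 - p0))) := by
    rw [lt_div_iff₀ (by positivity)]
    have hqv : q = (1 - d) / (u - d) := rfl
    have hq'v : 1 - q = (u - 1) / (u - d) := by rw [hqv]; field_simp; ring
    rw [hqv, hq'v, div_mul_eq_mul_div, div_mul_eq_mul_div, one_mul,
        div_lt_div_iff₀ hud hud]
    nlinarith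
  have hF0pos : 0 < F 0 := by
    rw [hF0]
    exact mul_pos hcpos (Real.log_pos harg)
  refine ⟨hF0pos, fun y hy => ?_⟩
  by_contra h
  push_neg at h
  set e : ℝ := Real.exp (γ * θ * y) with he_def
  have he : 0 < e := Real.exp_pos _
  have he1 : e ≤ 1 := by
    rw [he_def, Real.exp_le_one_iff]
    exact mul_nonpos_of_nonneg_of_nonpos (by positivity) h
  have hloge : Real.log e = γ * θ * y := Real.log_exp _
  have haux := aux_log pcn p0 p1 q e hcn0 hcn1 hp00 hp01 hp10 hp11 hq0 hq1 he he1
  have hFy : F y = ((p1 - p0) / γ) * Real.log ((1 - q) * (pcn * e * p1 + (1 - pcn) * p0) /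
      (q * (pcn * e * (1 - p1) + (1 - pcn) * (1 - p0)))) := by
    simp only [F, hc, he_def]
  have hdiff : F 0 - F y ≤ ((p1 - p0) / γ) * (-(γ * θ * y)) := by
    rw [hF0, hFy, ← mul_sub]
    rw [← hloge]
    exact mul_le_mul_of_nonneg_left haux hcpos.le
  have hyle : y ≤ 0 := h
  have hcoef : ((p1 - p0) / γ) * (-(γ * θ * y)) = -((p1 - p0) * θ * y) := by
    field_simp
  rw [hcoef] at hdiff
  -- F 0 ≤ F y - (p1-p0)θ y = y - (p1-p0)θ y
  have : F 0 ≤ y - (p1 - p0) * θ * y := by linarith [hy ▸ hdiff]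
  have h1 : (p1 - p0) * θ ≤ 1 := by nlinarith
  have h2 : 0 ≤ (-y) * (1 - (p1 - p0) * θ) :=
    mul_nonneg (neg_nonneg.mpr hyle) (by linarith)
  nlinarith
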